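/- Let v^{(1)},…,v^{(m)} be an orthonormal basis of ℂᵐ, let P^{(j)} := v^{(j)} [v^{(j)}]* be the corresponding orthogonal projections, let h^{(1)},…,h^{(m)} be pairwise distinct real numbers, and let B^{(1)},…,B^{(m)} be arbitrary complex m×m matrices. Then the system of equations (h^{(l)} − h^{(j)}) P^{(l)} u^{(j)} + P^{(l)} B^{(j)} = 0 for all l ≠ j, together with Σ_{j=1}^m u^{(j)} = 0, has a unique solution in complex m×m matrices u^{(1)},…,u^{(m)}, namely u^{(j)} = Σ_{l ≠ j} (P^{(l)} B^{(j)} + P^{(j)} B^{(l)}) / (h^{(j)} − h^{(l)}). -/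
import Mathlib


open Matrix MeasureTheory

noncomputable section

/-- Phase space `ℝⁿ_x × ℝⁿ_ξ`. -/
abbrev Phase (n : ℕ) := (Fin n → ℝ) × (Fin n → ℝ)

/-- Direction of differentiation in the position variable `x^α`. -/
def dX (n : ℕ) (α : Fin n) : Phase n := (Pi.single α 1, 0)

/-- Direction of differentiation in the dual variable `ξ_α`. -/
def dXi (n : ℕ) (α : Fin n) : Phase n := (0, Pi.single α 1)

/-- Partial derivative of a real scalar function in the direction `d`. -/
def pdS {n : ℕ} (f : Phase n → ℝ) (d : Phase n) (p : Phase n) : ℝ :=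
  fderiv ℝ f p d

/-- Partial derivative of a complex scalar function in the direction `d`. -/
def pdC {n : ℕ} (f : Phase n → ℂ) (d : Phase n) (p : Phase n) : ℂ :=
  fderiv ℝ f p d

/-- Entrywise partial derivative of a column-function in the direction `d`. -/
def pdV {n m : ℕ} (v : Phase n → Fin m → ℂ) (d : Phase n) (p : Phase n) : Fin m → ℂ :=
  fun i => fderiv ℝ (fun q => v q i) p d

/-- Entrywise partial derivative of the conjugate transpose (row) `v*` of a
column-function `v`, in the direction `d`. -/
def pdVstar {n m : ℕ} (v : Phase n → Fin m → ℂ) (d : Phase n) (p : Phase n) : Fin m → ℂ :=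
  fun i => fderiv ℝ (fun q => star (v q i)) p d

/-- Entrywise partial derivative of a matrix-function in the direction `d`. -/
def pdM {n m : ℕ} (A : Phase n → Matrix (Fin m) (Fin m) ℂ) (d : Phase n) (p : Phase n) :
    Matrix (Fin m) (Fin m) ℂ :=
  Matrix.of fun i j => fderiv ℝ (fun q => A q i j) p d

/-- Second partial derivative of a real scalar function. -/
def pdS2 {n : ℕ} (f : Phase n → ℝ) (d1 d2 : Phase n) (p : Phase n) : ℝ :=
  pdS (fun q => pdS f d2 q) d1 p

/-- Entrywise second partial derivative of a matrix-function. -/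
def pdM2 {n m : ℕ} (A : Phase n → Matrix (Fin m) (Fin m) ℂ) (d1 d2 : Phase n) (p : Phase n) :
    Matrix (Fin m) (Fin m) ℂ :=
  pdM (fun q => pdM A d2 q) d1 p

/-- The scalar Poisson bracket `{v*, v}`. -/
def sbrack {n m : ℕ} (v : Phase n → Fin m → ℂ) (p : Phase n) : ℂ :=
  ∑ α : Fin n, (pdVstar v (dX n α) p ⬝ᵥ pdV v (dXi n α) p
    - pdVstar v (dXi n α) p ⬝ᵥ pdV v (dX n α) p)

/-- The Poisson bracket `{A, B}` of two matrix-functions. -/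
def mbrack {n m : ℕ} (A B : Phase n → Matrix (Fin m) (Fin m) ℂ) (p : Phase n) :
    Matrix (Fin m) (Fin m) ℂ :=
  ∑ α : Fin n, (pdM A (dX n α) p * pdM B (dXi n α) p - pdM A (dXi n α) p * pdM B (dX n α) p)

/-- The generalised Poisson bracket `{v*, Q, v}`, where `Q` is a matrix-function
(which is not differentiated). -/
def gbrack {n m : ℕ} (v : Phase n → Fin m → ℂ) (Q : Phase n → Matrix (Fin m) (Fin m) ℂ)
    (p : Phase n) : ℂ :=
  ∑ α : Fin n, (pdVstar v (dX n α) p ⬝ᵥ (Q p).mulVec (pdV v (dXi n α) p)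
    - pdVstar v (dXi n α) p ⬝ᵥ (Q p).mulVec (pdV v (dX n α) p))

/-- The orthogonal projection `v v*` onto the span of a column `v`. -/
def Proj1 {n m : ℕ} (v : Phase n → Fin m → ℂ) (p : Phase n) : Matrix (Fin m) (Fin m) ℂ :=
  vecMulVec (v p) (star (v p))

theorem statement_5 {m : ℕ} (v : Fin m → Fin m → ℂ)
    (hON : ∀ j k, star (v j) ⬝ᵥ v k = if j = k then 1 else 0)
    (h : Fin m → ℝ) (hdist : Function.Injective h)
    (B : Fin m → Matrix (Fin m) (Fin m) ℂ)
    (P : Fin m → Matrix (Fin m) (Fin m) ℂ)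
    (hP : ∀ j, P j = vecMulVec (v j) (star (v j)))
    (u : Fin m → Matrix (Fin m) (Fin m) ℂ) :
    ((∀ l j, l ≠ j → ((h l : ℂ) - (h j : ℂ)) • (P l * u j) + P l * B j = 0)
        ∧ ∑ j, u j = 0)
    ↔ (∀ j, u j = ∑ l ∈ Finset.univ.filter (fun l => l ≠ j),
        ((h j : ℂ) - (h l : ℂ))⁻¹ • (P l * B j + P j * B l)) := by

  classical
  have hinj : ∀ {a b : Fin m}, a ≠ b → ((h a : ℂ) - (h b : ℂ)) ≠ 0 := by
    intro a b hab
    rw [sub_ne_zero]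
    exact fun e => hab (hdist (Complex.ofReal_inj.mp e))
  have hPP : ∀ l k, P l * P k = if l = k then P l else 0 := by
    intro l k
    have key : ∀ i j : Fin m,
        ∑ t, (v l i * star (v l) t) * (v k t * star (v k) j)
          = (star (v l) ⬝ᵥ v k) * (v l i * star (v k) j) := by
      intro i j
      rw [dotProduct, Finset.sum_mul]
      exact Finset.sum_congr rfl fun t _ => by ring
    by_cases hlk : l = k
    · subst hlk
      rw [if_pos rfl]
      ext i j
      simp only [hP, Matrix.mul_apply, vecMulVec_apply]
      rw [key, hON l l, if_pos rfl, one_mul]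
    · rw [if_neg hlk]
      ext i j
      simp only [hP, Matrix.mul_apply, vecMulVec_apply, Matrix.zero_apply]
      rw [key, hON l k, if_neg hlk, zero_mul]
  have hsum1 : ∑ l, P l = 1 := by
    set N : Matrix (Fin m) (Fin m) ℂ := Matrix.of fun i l => v l i with hN
    have h1 : Nᴴ * N = 1 := by
      ext j k
      have := hON j k
      simpa [hN, Matrix.mul_apply, Matrix.conjTranspose_apply, dotProduct,
        Matrix.one_apply] using this
    have h2 : N * Nᴴ = 1 := mul_eq_one_comm.mp h1
    have e : ∑ l, P l = N * Nᴴ := by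
      ext i j
      simp [hP, hN, Matrix.mul_apply, Matrix.conjTranspose_apply, vecMulVec_apply,
        Matrix.sum_apply]
    rw [e, h2]
  constructor
  · rintro ⟨heq, hzero⟩ j
    have hPu : ∀ l k, l ≠ k → P l * u k = ((h k : ℂ) - h l)⁻¹ • (P l * B k) := by
      intro l k hlk
      have hc := hinj hlk
      have e' : ((h l : ℂ) - h k) • (P l * u k) = -(P l * B k) :=
        eq_neg_of_add_eq_zero_left (heq l k hlk)
      have e2 : P l * u k = ((h l : ℂ) - h k)⁻¹ • -(P l * B k) := by
        rw [← e', smul_smul, inv_mul_cancel₀ hc, one_smul]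
      rw [e2, smul_neg, ← neg_smul, ← inv_neg, neg_sub]
    have hPj : P j * u j = ∑ l ∈ Finset.univ.erase j,
        ((h j : ℂ) - h l)⁻¹ • (P j * B l) := by
      have hz : ∑ k, P j * u k = 0 := by
        rw [← Finset.mul_sum, hzero, mul_zero]
      have split := Finset.add_sum_erase Finset.univ (fun k => P j * u k) (Finset.mem_univ j)
      have hT : P j * u j + ∑ k ∈ Finset.univ.erase j, P j * u k = 0 := by
        rw [split]; exact hz
      have e3 := eq_neg_of_add_eq_zero_left hT
      rw [e3, ← Finset.sum_neg_distrib]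
      refine Finset.sum_congr rfl fun k hk => ?_
      rw [hPu j k (Finset.mem_erase.mp hk).1.symm, ← neg_smul, ← inv_neg, neg_sub]
    have hu1 : u j = ∑ l, P l * u j := by
      rw [← Finset.sum_mul, hsum1, one_mul]
    rw [hu1, ← Finset.add_sum_erase Finset.univ (fun l => P l * u j) (Finset.mem_univ j),
      hPj, Finset.filter_ne', ← Finset.sum_add_distrib]
    refine Finset.sum_congr rfl fun l hl => ?_
    rw [hPu l j (Finset.mem_erase.mp hl).1, smul_add]
    exact add_comm _ _
  · intro hu
    refine ⟨?_, ?_⟩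
    · intro l j hlj
      have hmem : l ∈ Finset.univ.filter (fun k => k ≠ j) := by
        simp [hlj]
      have key : P l * u j = ((h j : ℂ) - h l)⁻¹ • (P l * B j) := by
        rw [hu j, Finset.mul_sum, Finset.sum_eq_single_of_mem l hmem]
        · rw [Matrix.mul_smul, mul_add, ← Matrix.mul_assoc, ← Matrix.mul_assoc,
            hPP l l, hPP l j, if_pos rfl, if_neg hlj, Matrix.zero_mul, add_zero]
        · intro k hk hkl
          rw [Matrix.mul_smul, mul_add, ← Matrix.mul_assoc, ← Matrix.mul_assoc,
            hPP l k, hPP l j, if_neg (fun e => hkl e.symm), if_neg hlj,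
            Matrix.zero_mul, Matrix.zero_mul, add_zero, smul_zero]
      rw [key, smul_smul, ← neg_sub ((h j : ℂ)) ((h l : ℂ)), neg_mul,
        mul_inv_cancel₀ (hinj (Ne.symm hlj)), neg_smul, one_smul, neg_add_cancel]
    · have hfull : ∀ j, u j = ∑ l, ((h j : ℂ) - h l)⁻¹ • (P l * B j + P j * B l) := by
        intro j
        rw [hu j, Finset.sum_filter]
        refine Finset.sum_congr rfl fun l _ => ?_
        by_cases hlj : l = j
        · subst hlj; simp
        · rw [if_pos hlj]
      have hanti : ∀ j l : Fin m, ((h j : ℂ) - h l)⁻¹ • (P l * B j + P j * B l)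
          + ((h l : ℂ) - h j)⁻¹ • (P j * B l + P l * B j) = 0 := by
        intro j l
        rw [add_comm (P j * B l), ← neg_sub ((h j : ℂ)) ((h l : ℂ)), inv_neg,
          neg_smul, add_neg_cancel]
      have e1 : ∑ j, u j = ∑ j, ∑ l, ((h j : ℂ) - h l)⁻¹ • (P l * B j + P j * B l) :=
        Finset.sum_congr rfl fun j _ => hfull j
      have e2 : ∑ j, u j = ∑ l, ∑ j, ((h j : ℂ) - h l)⁻¹ • (P l * B j + P j * B l) := by
        rw [e1, Finset.sum_comm]
      have hadd : (∑ j, u j) + (∑ j, u j) = 0 := by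
        nth_rewrite 1 [e2]
        nth_rewrite 1 [e1]
        rw [← Finset.sum_add_distrib]
        refine Finset.sum_eq_zero fun x _ => ?_
        rw [← Finset.sum_add_distrib]
        exact Finset.sum_eq_zero fun j _ => hanti j x
      have h2 : (2 : ℂ) • (∑ j, u j) = 0 := by rw [two_smul]; exact hadd
      rcases smul_eq_zero.mp h2 with hc | hc
      · exact absurd hc two_ne_zero
      · exact hc
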